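/- Let f be an accessible homeomorphism of a metric space M, and let A, B : M → GL(V) generate cocycles equipped with stable and unstable holonomies H^A and H^B. Suppose there exist x₀ ∈ M and C₀ ∈ GL(V) such that: (i) H^{A,P}_{x₀} = C₀ ∘ H^{B,P}_{x₀} ∘ C₀⁻¹ for every su-cycle P based at x₀; and (ii) A(x₀) = C_{fx₀} ∘ B(x₀) ∘ C₀⁻¹, where C_{fx₀} = H^{A,Q}_{x₀,fx₀} ∘ C₀ ∘ (H^{B,Q}_{x₀,fx₀})⁻¹ for some su-path Q from x₀ to fx₀. Then there exists a map C : M → GL(V) with C(x₀) = C₀ such that A(x) = C(fx) ∘ B(x) ∘ C(x)⁻¹ for all x ∈ M and C intertwines H^A and H^B. -/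

import Mathlib

open Filter Topology

/-- The cocycle generated by `A : M → GL(V)` over `f`: `A⁰_x = Id` and
`Aⁿ_x = A(f^{n−1}x) ∘ ⋯ ∘ A(fx) ∘ A(x)`. -/
noncomputable def coc {M : Type*} {V : Type*} [NormedAddCommGroup V] [NormedSpace ℝ V]
    (f : M → M) (A : M → (V →L[ℝ] V)ˣ) : ℕ → M → (V →L[ℝ] V)ˣ
  | 0, _ => 1
  | n + 1, x => coc f A n (f x) * A x

/-- The stable set `Wˢ(x) = {y : dist(fⁿx, fⁿy) → 0}`. -/
def stableSet {M : Type*} [MetricSpace M] (f : M → M) (x : M) : Set M :=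
  {y | Tendsto (fun n : ℕ => dist (f^[n] x) (f^[n] y)) atTop (𝓝 0)}

/-- The unstable set `Wᵘ(x) = {y : dist(f⁻ⁿx, f⁻ⁿy) → 0}`. -/
def unstableSet {M : Type*} [MetricSpace M] (f : M ≃ₜ M) (x : M) : Set M :=
  {y | Tendsto (fun n : ℕ => dist ((⇑f.symm)^[n] x) ((⇑f.symm)^[n] y)) atTop (𝓝 0)}

/-- A stable holonomy for the cocycle generated by `A`: a family `H x y ∈ GL(V)`
(relevant for `y ∈ Wˢ(x)`) with `H x x = Id`, `H y z ∘ H x y = H x z`, and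
`H x y = (Aⁿ_y)⁻¹ ∘ H (fⁿx) (fⁿy) ∘ Aⁿ_x` for all `n`. -/
def IsStableHolonomy {M : Type*} [MetricSpace M] {V : Type*} [NormedAddCommGroup V]
    [NormedSpace ℝ V] (f : M → M) (A : M → (V →L[ℝ] V)ˣ)
    (H : M → M → (V →L[ℝ] V)ˣ) : Prop :=
  (∀ x, H x x = 1) ∧
  (∀ x y z, y ∈ stableSet f x → z ∈ stableSet f y → H y z * H x y = H x z) ∧
  (∀ x y, y ∈ stableSet f x → ∀ n : ℕ,
    H x y = (coc f A n y)⁻¹ * H (f^[n] x) (f^[n] y) * coc f A n x)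

/-- An unstable holonomy for the cocycle generated by `A`: a family `H x y ∈ GL(V)`
(relevant for `y ∈ Wᵘ(x)`) with `H x x = Id`, `H y z ∘ H x y = H x z`, and
`H x y = (A⁻ⁿ_y)⁻¹ ∘ H (f⁻ⁿx) (f⁻ⁿy) ∘ A⁻ⁿ_x` for all `n`, where
`A⁻ⁿ_x = (Aⁿ_{f⁻ⁿx})⁻¹`. -/
def IsUnstableHolonomy {M : Type*} [MetricSpace M] {V : Type*} [NormedAddCommGroup V]
    [NormedSpace ℝ V] (f : M ≃ₜ M) (A : M → (V →L[ℝ] V)ˣ)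
    (H : M → M → (V →L[ℝ] V)ˣ) : Prop :=
  (∀ x, H x x = 1) ∧
  (∀ x y z, y ∈ unstableSet f x → z ∈ unstableSet f y → H y z * H x y = H x z) ∧
  (∀ x y, y ∈ unstableSet f x → ∀ n : ℕ,
    H x y = coc (⇑f) A n ((⇑f.symm)^[n] y) * H ((⇑f.symm)^[n] x) ((⇑f.symm)^[n] y) *
      (coc (⇑f) A n ((⇑f.symm)^[n] x))⁻¹)

/-- An `su`-path starting at `x` is encoded by a list of labelled steps: step
`(true, y)` goes to `y ∈ Wˢ` of the current point, step `(false, y)` goes to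
`y ∈ Wᵘ` of the current point. `suChain f x p` says the list `p` is a valid
`su`-path starting at `x`. -/
def suChain {M : Type*} [MetricSpace M] (f : M ≃ₜ M) : M → List (Bool × M) → Prop
  | _, [] => True
  | x, (b, y) :: p => (if b then y ∈ stableSet (⇑f) x else y ∈ unstableSet f x) ∧ suChain f y p

/-- The endpoint of an `su`-path starting at `x` encoded by the list `p`. -/
def chainEnd {M : Type*} : M → List (Bool × M) → M
  | x, [] => x
  | _, (_, y) :: p => chainEnd y p

/-- The weight `H^P = H_{x_{k−1},x_k} ∘ ⋯ ∘ H_{x₀,x₁}` of an `su`-path with respect to a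
pair `(Hs, Hu)` of a stable and an unstable holonomy. -/
noncomputable def chainWeight {M : Type*} {V : Type*} [NormedAddCommGroup V]
    [NormedSpace ℝ V] (Hs Hu : M → M → (V →L[ℝ] V)ˣ) :
    M → List (Bool × M) → (V →L[ℝ] V)ˣ
  | _, [] => 1
  | x, (b, y) :: p => chainWeight Hs Hu y p * (if b then Hs x y else Hu x y)
section Helpers

variable {V : Type*} [NormedAddCommGroup V] [NormedSpace ℝ V]
variable {M : Type*} [MetricSpace M] (f : M ≃ₜ M)

lemma coc_one_eq (A : M → (V →L[ℝ] V)ˣ) (x : M) : coc (⇑f) A 1 x = A x := by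
  show coc (⇑f) A 0 (f x) * A x = A x
  show 1 * A x = A x
  exact one_mul _

lemma stable_symm {x y : M} (h : y ∈ stableSet (⇑f) x) : x ∈ stableSet (⇑f) y := by
  simpa [stableSet, dist_comm] using h

lemma unstable_symm {x y : M} (h : y ∈ unstableSet f x) : x ∈ unstableSet f y := by
  simpa [unstableSet, dist_comm] using h

lemma stable_map {x y : M} (h : y ∈ stableSet (⇑f) x) : f y ∈ stableSet (⇑f) (f x) := by
  have h2 := h.comp (tendsto_add_atTop_nat 1)
  simp only [stableSet, Set.mem_setOf_eq] at h2 ⊢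
  simpa [Function.comp_def, Function.iterate_succ_apply] using h2

lemma unstable_map {x y : M} (h : y ∈ unstableSet f x) : f y ∈ unstableSet f (f x) := by
  simp only [unstableSet, Set.mem_setOf_eq] at h ⊢
  apply (tendsto_add_atTop_iff_nat 1).mp
  simpa [Function.iterate_succ_apply, f.symm_apply_apply] using h

end Helpers
set_option linter.unusedSectionVars false

section Helpers2

variable {V : Type*} [NormedAddCommGroup V] [NormedSpace ℝ V]
variable {M : Type*} [MetricSpace M] (f : M ≃ₜ M)

lemma stable_hol_inv {A : M → (V →L[ℝ] V)ˣ} {H : M → M → (V →L[ℝ] V)ˣ}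
    (hH : IsStableHolonomy (⇑f) A H) {x y : M} (h : y ∈ stableSet (⇑f) x) :
    H y x = (H x y)⁻¹ := by
  have h2 := hH.2.1 x y x h (stable_symm f h)
  rw [hH.1] at h2
  exact eq_inv_of_mul_eq_one_left h2

lemma unstable_hol_inv {A : M → (V →L[ℝ] V)ˣ} {H : M → M → (V →L[ℝ] V)ˣ}
    (hH : IsUnstableHolonomy f A H) {x y : M} (h : y ∈ unstableSet f x) :
    H y x = (H x y)⁻¹ := by
  have h2 := hH.2.1 x y x h (unstable_symm f h)
  rw [hH.1] at h2
  exact eq_inv_of_mul_eq_one_left h2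

lemma stable_hol_equiv {A : M → (V →L[ℝ] V)ˣ} {H : M → M → (V →L[ℝ] V)ˣ}
    (hH : IsStableHolonomy (⇑f) A H) {x y : M} (h : y ∈ stableSet (⇑f) x) :
    H (f x) (f y) = A y * H x y * (A x)⁻¹ := by
  have h1 := hH.2.2 x y h 1
  simp only [coc_one_eq, Function.iterate_one] at h1
  rw [h1]; group

lemma unstable_hol_equiv {A : M → (V →L[ℝ] V)ˣ} {H : M → M → (V →L[ℝ] V)ˣ}
    (hH : IsUnstableHolonomy f A H) {x y : M} (h : y ∈ unstableSet f x) :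
    H (f x) (f y) = A y * H x y * (A x)⁻¹ := by
  have h1 := hH.2.2 (f x) (f y) (unstable_map f h) 1
  simp only [Function.iterate_one, Homeomorph.symm_apply_apply, coc_one_eq] at h1
  exact h1

lemma chainEnd_append (x : M) (p q : List (Bool × M)) :
    chainEnd x (p ++ q) = chainEnd (chainEnd x p) q := by
  induction p generalizing x with
  | nil => rfl
  | cons a p ih => obtain ⟨b, y⟩ := a; simp only [List.cons_append, chainEnd]; exact ih y

lemma suChain_append {x : M} {p q : List (Bool × M)} (hp : suChain f x p)
    (hq : suChain f (chainEnd x p) q) : suChain f x (p ++ q) := by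
  induction p generalizing x with
  | nil => exact hq
  | cons a p ih =>
    obtain ⟨b, y⟩ := a
    exact ⟨hp.1, ih hp.2 hq⟩

lemma chainWeight_append (Hs Hu : M → M → (V →L[ℝ] V)ˣ) (x : M) (p q : List (Bool × M)) :
    chainWeight Hs Hu x (p ++ q)
      = chainWeight Hs Hu (chainEnd x p) q * chainWeight Hs Hu x p := by
  induction p generalizing x with
  | nil => simp [chainEnd, chainWeight]
  | cons a p ih =>
    obtain ⟨b, y⟩ := a
    simp only [List.cons_append, chainWeight, chainEnd, List.append_eq, ih y, mul_assoc]

def revChain {M : Type*} : M → List (Bool × M) → List (Bool × M)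
  | _, [] => []
  | x, (b, y) :: p => revChain y p ++ [(b, x)]

lemma revChain_spec (Hs Hu : M → M → (V →L[ℝ] V)ˣ)
    (hs : ∀ x y : M, y ∈ stableSet (⇑f) x → Hs y x = (Hs x y)⁻¹)
    (hu : ∀ x y : M, y ∈ unstableSet f x → Hu y x = (Hu x y)⁻¹) :
    ∀ (p : List (Bool × M)) (x : M), suChain f x p →
      suChain f (chainEnd x p) (revChain x p) ∧
      chainEnd (chainEnd x p) (revChain x p) = x ∧
      chainWeight Hs Hu (chainEnd x p) (revChain x p) = (chainWeight Hs Hu x p)⁻¹ := by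
  intro p
  induction p with
  | nil => intro x _; exact ⟨trivial, rfl, by simp [chainWeight, revChain, chainEnd]⟩
  | cons a p ih =>
    obtain ⟨b, y⟩ := a
    intro x hp
    obtain ⟨ih1, ih2, ih3⟩ := ih y hp.2
    have hby := hp.1
    have hstep : suChain f y [(b, x)] := by
      cases b with
      | true => exact ⟨stable_symm f hby, trivial⟩
      | false => exact ⟨unstable_symm f hby, trivial⟩
    refine ⟨?_, ?_, ?_⟩
    · show suChain f (chainEnd y p) (revChain y p ++ [(b, x)])
      refine suChain_append f ih1 ?_
      rw [ih2]; exact hstep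
    · show chainEnd (chainEnd y p) (revChain y p ++ [(b, x)]) = x
      rw [chainEnd_append, ih2]; rfl
    · show chainWeight Hs Hu (chainEnd y p) (revChain y p ++ [(b, x)])
        = (chainWeight Hs Hu x ((b, y) :: p))⁻¹
      rw [chainWeight_append, ih2, ih3]
      show chainWeight Hs Hu y [(b, x)] * (chainWeight Hs Hu y p)⁻¹
        = (chainWeight Hs Hu y p * (if b then Hs x y else Hu x y))⁻¹
      have : chainWeight Hs Hu y [(b, x)] = (if b then Hs x y else Hu x y)⁻¹ := by
        show 1 * (if b then Hs y x else Hu y x) = _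
        rw [one_mul]
        cases b with
        | true => simpa using hs x y hby
        | false => simpa using hu x y hby
      rw [this, mul_inv_rev]

def mapChain {M : Type*} (g : M → M) (p : List (Bool × M)) : List (Bool × M) :=
  p.map fun s => (s.1, g s.2)

lemma mapChain_spec (A : M → (V →L[ℝ] V)ˣ) (Hs Hu : M → M → (V →L[ℝ] V)ˣ)
    (hes : ∀ x y : M, y ∈ stableSet (⇑f) x → Hs (f x) (f y) = A y * Hs x y * (A x)⁻¹)
    (heu : ∀ x y : M, y ∈ unstableSet f x → Hu (f x) (f y) = A y * Hu x y * (A x)⁻¹) :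
    ∀ (p : List (Bool × M)) (x : M), suChain f x p →
      suChain f (f x) (mapChain (⇑f) p) ∧
      chainEnd (f x) (mapChain (⇑f) p) = f (chainEnd x p) ∧
      chainWeight Hs Hu (f x) (mapChain (⇑f) p)
        = A (chainEnd x p) * chainWeight Hs Hu x p * (A x)⁻¹ := by
  intro p
  induction p with
  | nil => intro x _; exact ⟨trivial, rfl, by simp [chainWeight, chainEnd, mapChain]⟩
  | cons a p ih =>
    obtain ⟨b, y⟩ := a
    intro x hp
    obtain ⟨ih1, ih2, ih3⟩ := ih y hp.2
    have hby := hp.1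
    refine ⟨?_, ih2, ?_⟩
    · refine ⟨?_, ih1⟩
      cases b with
      | true => exact stable_map f hby
      | false => exact unstable_map f hby
    · show chainWeight Hs Hu (f y) (mapChain (⇑f) p)
          * (if b then Hs (f x) (f y) else Hu (f x) (f y))
        = A (chainEnd y p) * (chainWeight Hs Hu y p * (if b then Hs x y else Hu x y)) * (A x)⁻¹
      rw [ih3]
      have : (if b then Hs (f x) (f y) else Hu (f x) (f y))
          = A y * (if b then Hs x y else Hu x y) * (A x)⁻¹ := by
        cases b with
        | true => simpa using hes x y hby
        | false => simpa using heu x y hby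
      rw [this]; group

end Helpers2

/-- Theorem 4.8: if (i) the `su`-cycle weights at `x₀` of `H^A` and `H^B` are
conjugate by `C₀`, and (ii) `A(x₀) = C_{fx₀} ∘ B(x₀) ∘ C₀⁻¹` where
`C_{fx₀} = H^{A,Q}_{x₀,fx₀} ∘ C₀ ∘ (H^{B,Q}_{x₀,fx₀})⁻¹` for some `su`-path `Q` from
`x₀` to `fx₀`, then there is a conjugacy `C` between `A` and `B` with `C(x₀) = C₀`
that intertwines `H^A` and `H^B`. -/
theorem stmt_11 {V : Type*} [NormedAddCommGroup V] [NormedSpace ℝ V] [CompleteSpace V]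
    {M : Type*} [MetricSpace M] (f : M ≃ₜ M) (A B : M → (V →L[ℝ] V)ˣ)
    (HAs HAu HBs HBu : M → M → (V →L[ℝ] V)ˣ)
    (hHAs : IsStableHolonomy (⇑f) A HAs) (hHAu : IsUnstableHolonomy f A HAu)
    (hHBs : IsStableHolonomy (⇑f) B HBs) (hHBu : IsUnstableHolonomy f B HBu)
    (hacc : ∀ x y : M, ∃ p : List (Bool × M), suChain f x p ∧ chainEnd x p = y)
    (x₀ : M) (C₀ : (V →L[ℝ] V)ˣ)
    (hcyc : ∀ p : List (Bool × M), suChain f x₀ p → chainEnd x₀ p = x₀ →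
      chainWeight HAs HAu x₀ p = C₀ * chainWeight HBs HBu x₀ p * C₀⁻¹)
    (Q : List (Bool × M)) (hQ : suChain f x₀ Q) (hQend : chainEnd x₀ Q = f x₀)
    (hii : A x₀ =
      (chainWeight HAs HAu x₀ Q * C₀ * (chainWeight HBs HBu x₀ Q)⁻¹) * B x₀ * C₀⁻¹) :
    ∃ C : M → (V →L[ℝ] V)ˣ, C x₀ = C₀ ∧
      (∀ x : M, A x = C (f x) * B x * (C x)⁻¹) ∧
      (∀ x y : M, y ∈ stableSet (⇑f) x → HAs x y = C y * HBs x y * (C x)⁻¹) ∧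
      (∀ x y : M, y ∈ unstableSet f x → HAu x y = C y * HBu x y * (C x)⁻¹) := by
  -- abbreviations for weights based at x₀
  set WA := chainWeight HAs HAu x₀ with hWA
  set WB := chainWeight HBs HBu x₀ with hWB
  -- the candidate value of C at the end of a path p
  let Φ : List (Bool × M) → (V →L[ℝ] V)ˣ := fun p => WA p * C₀ * (WB p)⁻¹
  have hΦdef : ∀ p, Φ p = WA p * C₀ * (WB p)⁻¹ := fun _ => rfl
  -- inverse properties of holonomies
  have hsA := fun x y h => stable_hol_inv f hHAs (x := x) (y := y) h
  have huA := fun x y h => unstable_hol_inv f hHAu (x := x) (y := y) h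
  have hsB := fun x y h => stable_hol_inv f hHBs (x := x) (y := y) h
  have huB := fun x y h => unstable_hol_inv f hHBu (x := x) (y := y) h
  -- well-definedness
  have key : ∀ p q : List (Bool × M), suChain f x₀ p → suChain f x₀ q →
      chainEnd x₀ p = chainEnd x₀ q → Φ p = Φ q := by
    intro p q hp hq hend
    obtain ⟨hrA1, hrA2, hrA3⟩ := revChain_spec f HAs HAu hsA huA q x₀ hq
    obtain ⟨-, -, hrB3⟩ := revChain_spec f HBs HBu hsB huB q x₀ hq
    have hc1 : suChain f x₀ (p ++ revChain x₀ q) := by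
      refine suChain_append f hp ?_
      rw [hend]; exact hrA1
    have hc2 : chainEnd x₀ (p ++ revChain x₀ q) = x₀ := by
      rw [chainEnd_append, hend, hrA2]
    have hcyc' := hcyc _ hc1 hc2
    rw [hWA, hWB, chainWeight_append, chainWeight_append, hend, hrA3, hrB3] at hcyc'
    have h2 : WA p = WA q * (C₀ * ((WB q)⁻¹ * WB p) * C₀⁻¹) := by
      rw [← hcyc', hWA]; group
    show WA p * C₀ * (WB p)⁻¹ = WA q * C₀ * (WB q)⁻¹
    rw [h2]; group
  -- the conjugacy
  let C : M → (V →L[ℝ] V)ˣ := fun x => Φ (hacc x₀ x).choose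
  have hCeq : ∀ (x : M) (p : List (Bool × M)), suChain f x₀ p → chainEnd x₀ p = x →
      C x = Φ p := fun x p hp he =>
    key _ p (hacc x₀ x).choose_spec.1 hp ((hacc x₀ x).choose_spec.2.trans he.symm)
  refine ⟨C, ?_, ?_, ?_, ?_⟩
  · -- C x₀ = C₀
    rw [hCeq x₀ [] trivial rfl, hΦdef]
    show (1 : (V →L[ℝ] V)ˣ) * C₀ * (1 : (V →L[ℝ] V)ˣ)⁻¹ = C₀
    simp
  · -- conjugacy relation
    intro x
    obtain ⟨p, hp, he⟩ := hacc x₀ x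
    have hCx := hCeq x p hp he
    have heAs := fun a b h => stable_hol_equiv f hHAs (x := a) (y := b) h
    have heAu := fun a b h => unstable_hol_equiv f hHAu (x := a) (y := b) h
    have heBs := fun a b h => stable_hol_equiv f hHBs (x := a) (y := b) h
    have heBu := fun a b h => unstable_hol_equiv f hHBu (x := a) (y := b) h
    obtain ⟨hmA1, hmA2, hmA3⟩ := mapChain_spec f A HAs HAu heAs heAu p x₀ hp
    obtain ⟨-, -, hmB3⟩ := mapChain_spec f B HBs HBu heBs heBu p x₀ hp
    have hr : suChain f x₀ (Q ++ mapChain (⇑f) p) := by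
      refine suChain_append f hQ ?_
      rw [hQend]; exact hmA1
    have hrend : chainEnd x₀ (Q ++ mapChain (⇑f) p) = f x := by
      rw [chainEnd_append, hQend, hmA2, he]
    have hCfx := hCeq (f x) _ hr hrend
    have e1 : WA (Q ++ mapChain (⇑f) p) = A x * WA p * (A x₀)⁻¹ * WA Q := by
      rw [hWA, chainWeight_append, hQend, hmA3, he]
    have e2 : WB (Q ++ mapChain (⇑f) p) = B x * WB p * (B x₀)⁻¹ * WB Q := by
      rw [hWB, chainWeight_append, hQend, hmB3, he]
    have key2 : WA Q * C₀ * (WB Q)⁻¹ * B x₀ = A x₀ * C₀ := by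
      rw [hii]; group
    have hCfx2 : C (f x) = A x * (WA p * C₀ * (WB p)⁻¹) * (B x)⁻¹ := by
      rw [hCfx, hΦdef, e1, e2]
      calc A x * WA p * (A x₀)⁻¹ * WA Q * C₀ * (B x * WB p * (B x₀)⁻¹ * WB Q)⁻¹
          = A x * WA p * ((A x₀)⁻¹ * (WA Q * C₀ * (WB Q)⁻¹ * B x₀)) * (WB p)⁻¹ * (B x)⁻¹ := by
            group
        _ = A x * WA p * ((A x₀)⁻¹ * (A x₀ * C₀)) * (WB p)⁻¹ * (B x)⁻¹ := by rw [key2]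
        _ = A x * (WA p * C₀ * (WB p)⁻¹) * (B x)⁻¹ := by group
    rw [hCfx2, hCx, hΦdef]
    group
  · -- stable holonomies intertwined
    intro x y hy
    obtain ⟨p, hp, he⟩ := hacc x₀ x
    have hCx := hCeq x p hp he
    have hp' : suChain f x₀ (p ++ [(true, y)]) := by
      refine suChain_append f hp ?_
      rw [he]; exact ⟨hy, trivial⟩
    have he' : chainEnd x₀ (p ++ [(true, y)]) = y := by
      rw [chainEnd_append, he]; rfl
    have hCy := hCeq y _ hp' he'
    have e1 : WA (p ++ [(true, y)]) = HAs x y * WA p := by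
      rw [hWA, chainWeight_append, he]
      show (1 * HAs x y) * _ = _
      rw [one_mul]
    have e2 : WB (p ++ [(true, y)]) = HBs x y * WB p := by
      rw [hWB, chainWeight_append, he]
      show (1 * HBs x y) * _ = _
      rw [one_mul]
    rw [hCy, hCx, hΦdef, hΦdef, e1, e2]
    group
  · -- unstable holonomies intertwined
    intro x y hy
    obtain ⟨p, hp, he⟩ := hacc x₀ x
    have hCx := hCeq x p hp he
    have hp' : suChain f x₀ (p ++ [(false, y)]) := by
      refine suChain_append f hp ?_
      rw [he]; exact ⟨hy, trivial⟩
    have he' : chainEnd x₀ (p ++ [(false, y)]) = y := by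
      rw [chainEnd_append, he]; rfl
    have hCy := hCeq y _ hp' he'
    have e1 : WA (p ++ [(false, y)]) = HAu x y * WA p := by
      rw [hWA, chainWeight_append, he]
      show (1 * HAu x y) * _ = _
      rw [one_mul]
    have e2 : WB (p ++ [(false, y)]) = HBu x y * WB p := by
      rw [hWB, chainWeight_append, he]
      show (1 * HBu x y) * _ = _
      rw [one_mul]
    rw [hCy, hCx, hΦdef, hΦdef, e1, e2]
    group
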